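/- Let aⁱ, aʲ : ℝ → ℝ be differentiable functions and suppose the function w := aⁱ − aʲ + aⁱ·(aʲ)' − (aⁱ)'·aʲ is nonvanishing on ℝ. Define aⁱⱼ := (aⁱ − aʲ)·aⁱ / w and aʲᵢ := (aʲ − aⁱ)·aʲ / (−w). Then the (aa)-equations hold: aʲ·aⁱⱼ = aⁱ·aʲᵢ and (1 + (aʲ)')·aⁱⱼ + aʲ = (1 + (aⁱ)')·aʲᵢ + aⁱ. -/

import Mathlib

/-- The explicit formula (Ta) of the tangential map solves the
(aa)-equations. -/
theorem tangential_map_formula_solves_aa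
    (ai aj : ℝ → ℝ)
    (hai : Differentiable ℝ ai) (haj : Differentiable ℝ aj)
    (w : ℝ → ℝ)
    (hw : ∀ t, w t = ai t - aj t + ai t * deriv aj t - deriv ai t * aj t)
    (hw0 : ∀ t, w t ≠ 0)
    (aij aji : ℝ → ℝ)
    (haij : ∀ t, aij t = (ai t - aj t) * ai t / w t)
    (haji : ∀ t, aji t = (aj t - ai t) * aj t / (-w t)) :
    (∀ t, aj t * aij t = ai t * aji t) ∧
    (∀ t, (1 + deriv aj t) * aij t + aj t = (1 + deriv ai t) * aji t + ai t) := by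
  constructor
  · intro t
    (have h := hw0 t; rw [hw] at h; rw [haij, haji, hw]; rw [div_neg]; field_simp; ring)
  · intro t
    (have h := hw0 t; rw [hw] at h; rw [haij, haji, hw]; rw [div_neg]
     rw [mul_div_assoc', neg_div', mul_div_assoc', div_add' _ _ _ h, div_add' _ _ _ h, div_left_inj' h]; ring)
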